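/- For s ∈ (0,1), p ≥ 1 with 1/p*_s := 1/p − s/d > 0, the fractional Gagliardo–Nirenberg–Sobolev inequality holds: for all u ∈ L^{p*_s}(ℝ^d), ‖u‖_{L^{p*_s}(ℝ^d)} ≤ 2^{p*_s/p} |B(0,1)|^{−1/p − s/d} (∬_{ℝ^d×ℝ^d} |u(x)−u(y)|^p / |x−y|^{d+sp} dx dy)^{1/p}. -/

import Mathlib

open MeasureTheory ENNReal

section Aux

/-- Real-number optimization step for the fractional GNS inequality. -/
lemma gns_real_opt {D s p α κ f ℓ m : ℝ} (hD : 0 < D) (hκ : 0 < κ) (hf : 0 ≤ f)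
    (hℓ : 0 < ℓ) (hm : 0 ≤ m) (hp : 1 ≤ p)
    (hα0 : 0 < α) (hsp : s * p = D * (1 - α))
    (H : ∀ r : ℝ, 0 < r →
      m ^ p * (κ * r ^ D) ≤ 2 ^ (p - 1) * (r ^ (D + s * p) * f + ℓ ^ α * (κ * r ^ D) ^ (1 - α))) :
    m ^ (p / α) ≤ 2 ^ (p / α) * κ ^ (α - 2) * ℓ ^ (1 - α) * f := by
  have hp0 : (0:ℝ) < p := lt_of_lt_of_le one_pos hp
  set K := Real.log κ with hK
  set G := Real.log ℓ with hG
  have hκe : κ = Real.exp K := (Real.exp_log hκ).symm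
  have hℓe : ℓ = Real.exp G := (Real.exp_log hℓ).symm
  rcases hf.eq_or_lt with hf0 | hf0
  · -- f = 0 : show m = 0
    have hm0 : m = 0 := by
      by_contra hmne
      have hm' : 0 < m := lt_of_le_of_ne hm (Ne.symm hmne)
      have hmp : 0 < m ^ p := Real.rpow_pos_of_pos hm' _
      set c : ℝ := 2 ^ (p - 1) * (ℓ ^ α * κ ^ (1 - α)) with hc
      have hcpos : 0 < c := by positivity
      set b : ℝ := 2 * c / (m ^ p * κ) + 1 with hb
      have hbpos : (0:ℝ) < b := by positivity
      set r : ℝ := b ^ (D * α)⁻¹ with hr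
      have hrpos : 0 < r := Real.rpow_pos_of_pos hbpos _
      have hDα : (0:ℝ) < D * α := by positivity
      have hrval : r ^ (D * α) = b := by
        rw [hr, ← Real.rpow_mul hbpos.le, inv_mul_cancel₀ hDα.ne', Real.rpow_one]
      have key := H r hrpos
      rw [← hf0] at key
      have hrD : (0:ℝ) < r ^ D := Real.rpow_pos_of_pos hrpos _
      have hsplit : r ^ D = r ^ (D * (1 - α)) * r ^ (D * α) := by
        rw [← Real.rpow_add hrpos]; ring_nf
      have hRHS : 2 ^ (p - 1) * (r ^ (D + s * p) * 0 + ℓ ^ α * (κ * r ^ D) ^ (1 - α))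
          = c * r ^ (D * (1 - α)) := by
        rw [mul_zero, zero_add, Real.mul_rpow hκ.le hrD.le, ← Real.rpow_mul hrpos.le, hc]
        ring
      rw [hRHS] at key
      have hlhs : m ^ p * (κ * r ^ D) = (m ^ p * κ * r ^ (D * α)) * r ^ (D * (1 - α)) := by
        rw [hsplit]; ring
      rw [hlhs] at key
      have hrDa : (0:ℝ) < r ^ (D * (1 - α)) := Real.rpow_pos_of_pos hrpos _
      have key2 : m ^ p * κ * r ^ (D * α) ≤ c :=
        le_of_mul_le_mul_right (by linarith [key]) hrDa
      rw [hrval] at key2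
      have hbv : m ^ p * κ * b = 2 * c + m ^ p * κ := by
        rw [hb]; field_simp
      nlinarith [key2, hcpos, hmp, hκ]
    rw [hm0, ← hf0, mul_zero, Real.zero_rpow (div_pos hp0 hα0).ne']
  · -- f > 0 : optimize at r = (κ^(1-α) ℓ^α / f)^(1/D)
    set Φ := Real.log f with hΦ
    have hfe : f = Real.exp Φ := (Real.exp_log hf0).symm
    set r : ℝ := Real.exp ((K * (1 - α) + G * α - Φ) / D) with hr
    have hrpos : 0 < r := Real.exp_pos _
    set W : ℝ := K * (α * α - 2 * α) + G * (α * (1 - α)) + Φ * α with hW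
    have key := H r hrpos
    have hRHS : 2 ^ (p - 1) * (r ^ (D + s * p) * f + ℓ ^ α * (κ * r ^ D) ^ (1 - α))
        = 2 ^ (p - 1) * ((Real.exp W + Real.exp W) * (κ * r ^ D)) := by
      rw [hκe, hℓe, hfe, hr]
      simp only [← Real.exp_mul, ← Real.exp_add, add_mul]
      congr 1
      congr 1 <;>
      · rw [Real.exp_eq_exp]
        first
        | (rw [hsp]; field_simp; ring)
        | (field_simp; ring)
    rw [hRHS] at key
    have hcpos : (0:ℝ) < κ * r ^ D := by positivity
    have hm1 : m ^ p ≤ 2 ^ p * Real.exp W := by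
      have h2 : (2:ℝ) ^ (p - 1) * (Real.exp W + Real.exp W) = 2 ^ p * Real.exp W := by
        rw [show (2:ℝ) ^ p = 2 ^ (p - 1) * 2 by
          rw [← Real.rpow_add_one (by norm_num : (2:ℝ) ≠ 0) (p - 1), sub_add_cancel]]
        ring
      have key' : m ^ p * (κ * r ^ D) ≤ (2 ^ p * Real.exp W) * (κ * r ^ D) := by
        calc m ^ p * (κ * r ^ D) ≤ 2 ^ (p - 1) * ((Real.exp W + Real.exp W) * (κ * r ^ D)) := key
          _ = (2 ^ p * Real.exp W) * (κ * r ^ D) := by rw [← h2]; ring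
      exact le_of_mul_le_mul_right key' hcpos
    have hfin := Real.rpow_le_rpow (by positivity) hm1 (by positivity : (0:ℝ) ≤ 1 / α)
    calc m ^ (p / α) = (m ^ p) ^ (1 / α) := by
          rw [← Real.rpow_mul hm, mul_one_div]
      _ ≤ (2 ^ p * Real.exp W) ^ (1 / α) := hfin
      _ = 2 ^ (p / α) * κ ^ (α - 2) * ℓ ^ (1 - α) * f := by
          rw [Real.mul_rpow (by positivity) (Real.exp_pos _).le, ← Real.rpow_mul (by norm_num),
            mul_one_div, ← Real.exp_mul, hκe, hℓe, hfe]
          simp only [← Real.exp_mul, ← Real.exp_add, mul_assoc]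
          congr 1
          rw [Real.exp_eq_exp, hW]
          field_simp

lemma gns_ofReal_abs_rpow (v : ℝ) {q : ℝ} (hq : 0 ≤ q) :
    ENNReal.ofReal (|v| ^ q) = (‖v‖₊ : ℝ≥0∞) ^ q := by
  rw [← enorm_eq_nnnorm, Real.enorm_eq_ofReal_abs, ← ENNReal.ofReal_rpow_of_nonneg (abs_nonneg v) hq]

end Aux

set_option maxHeartbeats 1000000 in
/-- the fractional Gagliardo–Nirenberg–Sobolev inequality: for `s ∈ (0,1)`,
`p ≥ 1` with `1/p*_s = 1/p − s/d > 0`, and `u ∈ L^{p*_s}(ℝ^d)`,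
`‖u‖_{L^{p*_s}} ≤ 2^{p*_s/p} |B(0,1)|^{−1/p−s/d} (∬ |u(x)−u(y)|^p/|x−y|^{d+sp} dx dy)^{1/p}`. -/
theorem stmt_13 {d : ℕ} (hd : 1 ≤ d) (s p ps : ℝ) (hs : s ∈ Set.Ioo (0 : ℝ) 1) (hp : 1 ≤ p)
    (hcrit : 0 < 1 / p - s / d) (hps : 1 / ps = 1 / p - s / d)
    (u : EuclideanSpace ℝ (Fin d) → ℝ) (hu : MemLp u (ENNReal.ofReal ps) volume) :
    eLpNorm u (ENNReal.ofReal ps) volume ≤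
      ENNReal.ofReal (2 ^ (ps / p) *
          (volume (Metric.ball (0 : EuclideanSpace ℝ (Fin d)) 1)).toReal ^ (-1 / p - s / d)) *
        (∫⁻ x, ∫⁻ y,
            ENNReal.ofReal (|u x - u y| ^ p / ‖x - y‖ ^ ((d : ℝ) + s * p))) ^ (1 / p) := by
  obtain ⟨hs0, hs1⟩ := hs
  have hp0 : (0:ℝ) < p := lt_of_lt_of_le one_pos hp
  have hd0 : (0:ℝ) < (d:ℝ) := by exact_mod_cast Nat.lt_of_lt_of_le Nat.zero_lt_one hd
  have hps0 : (0:ℝ) < ps := one_div_pos.mp (hps ▸ hcrit)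
  set α : ℝ := p / ps with hα
  have hα0 : 0 < α := div_pos hp0 hps0
  have hαval : α = 1 - s * p / (d:ℝ) := by
    have h1 : α = p * (1/ps) := by rw [hα]; ring
    rw [h1, hps]
    field_simp
  have hα1 : α < 1 := by
    have : 0 < s * p / (d:ℝ) := by positivity
    linarith [hαval]
  have hsp_eq : s * p = (d:ℝ) * (1 - α) := by
    rw [hαval]; field_simp
    ring
  have hps_eq : ps = p / α := by
    rw [hα]; field_simp
  have hkey : p * (d:ℝ) = ps * (d:ℝ) - ps * p * s := by
    have h := hps
    have hps0' : ps ≠ 0 := by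
      intro h0
      rw [h0] at h
      simp at h
      nlinarith [hcrit]
    field_simp at h
    nlinarith [h]
  have hpps : p < ps := by
    have : α * ps = p := by rw [hα]; field_simp
    nlinarith [hα1, hα0, hps0]
  -- basic measure facts
  haveI : Nontrivial (EuclideanSpace ℝ (Fin d)) := by
    apply Module.nontrivial_of_finrank_pos (R := ℝ)
    rw [finrank_euclideanSpace]
    simpa using Nat.lt_of_lt_of_le Nat.zero_lt_one hd
  set B1 : ℝ≥0∞ := volume (Metric.ball (0 : EuclideanSpace ℝ (Fin d)) 1) with hB1
  have hB1pos : 0 < B1 := Metric.measure_ball_pos _ _ one_pos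
  have hB1top : B1 ≠ ⊤ := (MeasureTheory.measure_ball_lt_top).ne
  set κ : ℝ := B1.toReal with hκ
  have hκpos : 0 < κ := ENNReal.toReal_pos hB1pos.ne' hB1top
  have hum : AEMeasurable u volume := hu.aestronglyMeasurable.aemeasurable
  set F : EuclideanSpace ℝ (Fin d) → ℝ≥0∞ :=
    fun x => ∫⁻ y, ENNReal.ofReal (|u x - u y| ^ p / ‖x - y‖ ^ ((d : ℝ) + s * p)) with hF
  set L : ℝ≥0∞ := ∫⁻ x, (‖u x‖₊ : ℝ≥0∞) ^ ps with hL
  set I : ℝ≥0∞ :=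
    ∫⁻ x, ∫⁻ y, ENNReal.ofReal (|u x - u y| ^ p / ‖x - y‖ ^ ((d : ℝ) + s * p)) with hI
  have hIF : I = ∫⁻ x, F x := rfl
  have hexp : (0:ℝ) ≤ (d:ℝ) + s * p := by positivity
  have hNorm : eLpNorm u (ENNReal.ofReal ps) volume = L ^ (1/ps) := by
    rw [eLpNorm_eq_lintegral_rpow_enorm_toReal (by simp [hps0, hps0.not_ge] : ENNReal.ofReal ps ≠ 0)
      ENNReal.ofReal_ne_top, ENNReal.toReal_ofReal hps0.le]
    rfl
  rw [hNorm]
  -- trivial cases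
  rcases eq_top_or_lt_top I with hItop | hIlt
  · rw [hItop, ENNReal.top_rpow_of_pos (by positivity), ENNReal.mul_top]
    · exact le_top
    · simp only [ne_eq, ENNReal.ofReal_eq_zero, not_le]
      positivity
  rcases eq_or_ne L 0 with hL0 | hL0
  · rw [hL0, ENNReal.zero_rpow_of_pos (by positivity)]
    exact zero_le
  have hLtop : L ≠ ⊤ := by
    have h2 := hu.2
    rw [hNorm, ENNReal.rpow_lt_top_iff_of_pos (by positivity)] at h2
    exact h2.ne
  -- the master pointwise inequality
  have master : ∀ (x : EuclideanSpace ℝ (Fin d)) (r : ℝ), 0 < r →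
      ENNReal.ofReal (|u x| ^ p) * volume (Metric.ball x r) ≤
        (2:ℝ≥0∞) ^ (p - 1) * (ENNReal.ofReal (r ^ ((d:ℝ) + s * p)) * F x +
          L ^ α * (volume (Metric.ball x r)) ^ (1 - α)) := by
    intro x r hr
    set B := Metric.ball x r with hBdef
    have hBmeas : MeasurableSet B := measurableSet_ball
    have hg1 : AEMeasurable (fun y => ENNReal.ofReal (|u x - u y| ^ p))
        (volume.restrict B) := by
      have h1 : AEMeasurable (fun y => u x - u y) (volume.restrict B) :=
        aemeasurable_const.sub hum.restrict
      have heq : (fun y => ENNReal.ofReal (|u x - u y| ^ p))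
          = fun y => ((‖u x - u y‖₊ : ℝ≥0∞)) ^ p := by
        funext y; exact gns_ofReal_abs_rpow _ hp0.le
      rw [heq]
      exact (ENNReal.continuous_rpow_const.measurable).comp_aemeasurable h1.enorm
    -- step 1: pointwise triangle bound
    have hpt : ∀ y : EuclideanSpace ℝ (Fin d), ENNReal.ofReal (|u x| ^ p) ≤
        (2:ℝ≥0∞) ^ (p - 1) *
          (ENNReal.ofReal (|u x - u y| ^ p) + ENNReal.ofReal (|u y| ^ p)) := by
      intro y
      rw [gns_ofReal_abs_rpow _ hp0.le, gns_ofReal_abs_rpow _ hp0.le,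
        gns_ofReal_abs_rpow _ hp0.le]
      calc (‖u x‖₊ : ℝ≥0∞) ^ p
          ≤ ((‖u x - u y‖₊ : ℝ≥0∞) + (‖u y‖₊ : ℝ≥0∞)) ^ p := by
            apply ENNReal.rpow_le_rpow _ hp0.le
            rw [← ENNReal.coe_add]
            apply ENNReal.coe_le_coe.mpr
            calc ‖u x‖₊ = ‖(u x - u y) + u y‖₊ := by rw [sub_add_cancel]
              _ ≤ ‖u x - u y‖₊ + ‖u y‖₊ := nnnorm_add_le _ _
        _ ≤ (2:ℝ≥0∞) ^ (p - 1) * ((‖u x - u y‖₊ : ℝ≥0∞) ^ p + (‖u y‖₊ : ℝ≥0∞) ^ p) :=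
            ENNReal.rpow_add_le_mul_rpow_add_rpow _ _ hp
    -- integrate the pointwise bound over B
    have step1 : ENNReal.ofReal (|u x| ^ p) * volume B ≤
        (2:ℝ≥0∞) ^ (p - 1) * ((∫⁻ y in B, ENNReal.ofReal (|u x - u y| ^ p)) +
          ∫⁻ y in B, ENNReal.ofReal (|u y| ^ p)) := by
      calc ENNReal.ofReal (|u x| ^ p) * volume B
          = ∫⁻ _ in B, ENNReal.ofReal (|u x| ^ p) := (setLIntegral_const _ _).symm
        _ ≤ ∫⁻ y in B, (2:ℝ≥0∞) ^ (p - 1) *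
              (ENNReal.ofReal (|u x - u y| ^ p) + ENNReal.ofReal (|u y| ^ p)) :=
            lintegral_mono fun y => hpt y
        _ = (2:ℝ≥0∞) ^ (p - 1) * ((∫⁻ y in B, ENNReal.ofReal (|u x - u y| ^ p)) +
              ∫⁻ y in B, ENNReal.ofReal (|u y| ^ p)) := by
            rw [lintegral_const_mul' _ _ (ENNReal.rpow_ne_top_of_nonneg (by linarith) (by simp)),
              lintegral_add_left' hg1]
    -- term 1 : Gagliardo seminorm bound
    have ht1 : (∫⁻ y in B, ENNReal.ofReal (|u x - u y| ^ p)) ≤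
        ENNReal.ofReal (r ^ ((d:ℝ) + s * p)) * F x := by
      have hptw : ∀ y ∈ B, ENNReal.ofReal (|u x - u y| ^ p) ≤
          ENNReal.ofReal (r ^ ((d:ℝ) + s * p)) *
            ENNReal.ofReal (|u x - u y| ^ p / ‖x - y‖ ^ ((d:ℝ) + s * p)) := by
        intro y hy
        rw [← ENNReal.ofReal_mul (by positivity)]
        apply ENNReal.ofReal_le_ofReal
        rcases eq_or_ne y x with rfl | hxy
        · rw [sub_self, abs_zero, Real.zero_rpow hp0.ne']
          positivity
        · have hxy0 : (0:ℝ) < ‖x - y‖ := by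
            rw [norm_pos_iff, sub_ne_zero]; exact fun h => hxy h.symm
          have hlt : ‖x - y‖ < r := by
            have := Metric.mem_ball.mp hy
            rwa [dist_eq_norm, norm_sub_rev] at this
          have h1 : ‖x - y‖ ^ ((d:ℝ) + s * p) ≤ r ^ ((d:ℝ) + s * p) :=
            Real.rpow_le_rpow (norm_nonneg _) hlt.le hexp
          have h2 : (0:ℝ) < ‖x - y‖ ^ ((d:ℝ) + s * p) := Real.rpow_pos_of_pos hxy0 _
          calc |u x - u y| ^ p
              = (|u x - u y| ^ p / ‖x - y‖ ^ ((d:ℝ) + s * p)) * ‖x - y‖ ^ ((d:ℝ) + s * p) := by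
                field_simp
            _ ≤ (|u x - u y| ^ p / ‖x - y‖ ^ ((d:ℝ) + s * p)) * r ^ ((d:ℝ) + s * p) := by
                apply mul_le_mul_of_nonneg_left h1 (by positivity)
            _ = r ^ ((d:ℝ) + s * p) * (|u x - u y| ^ p / ‖x - y‖ ^ ((d:ℝ) + s * p)) :=
                mul_comm _ _
      calc (∫⁻ y in B, ENNReal.ofReal (|u x - u y| ^ p))
          ≤ ∫⁻ y in B, ENNReal.ofReal (r ^ ((d:ℝ) + s * p)) *
              ENNReal.ofReal (|u x - u y| ^ p / ‖x - y‖ ^ ((d:ℝ) + s * p)) :=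
            lintegral_mono_ae (ae_restrict_of_forall_mem hBmeas hptw)
        _ = ENNReal.ofReal (r ^ ((d:ℝ) + s * p)) *
              ∫⁻ y in B, ENNReal.ofReal (|u x - u y| ^ p / ‖x - y‖ ^ ((d:ℝ) + s * p)) :=
            lintegral_const_mul' _ _ ENNReal.ofReal_ne_top
        _ ≤ ENNReal.ofReal (r ^ ((d:ℝ) + s * p)) * F x := by
            apply mul_le_mul_right
            exact setLIntegral_le_lintegral _ _
    -- term 2 : Hölder bound
    have ht2 : (∫⁻ y in B, ENNReal.ofReal (|u y| ^ p)) ≤ L ^ α * (volume B) ^ (1 - α) := by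
      have hP1 : 1 < ps / p := (one_lt_div hp0).mpr hpps
      have hQ : (ps / p).HolderConjugate (ps / (ps - p)) := by
        constructor
        · rw [inv_div, inv_div]
          field_simp
          ring
        · positivity
        · exact div_pos hps0 (by linarith)
      have hg : AEMeasurable (fun y => ((‖u y‖₊ : ℝ≥0∞)) ^ p) (volume.restrict B) :=
        (ENNReal.continuous_rpow_const.measurable).comp_aemeasurable hum.restrict.enorm
      have heq : (fun y => ENNReal.ofReal (|u y| ^ p)) = fun y => ((‖u y‖₊ : ℝ≥0∞)) ^ p := by
        funext y; exact gns_ofReal_abs_rpow _ hp0.le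
      rw [heq]
      have holder := ENNReal.lintegral_mul_le_Lp_mul_Lq (volume.restrict B) hQ hg
        (aemeasurable_const : AEMeasurable (fun _ => (1:ℝ≥0∞)) _)
      simp only [Pi.mul_apply, mul_one, ENNReal.one_rpow] at holder
      calc (∫⁻ y in B, ((‖u y‖₊ : ℝ≥0∞)) ^ p)
          ≤ (∫⁻ y in B, (((‖u y‖₊ : ℝ≥0∞)) ^ p) ^ (ps / p)) ^ (1 / (ps / p)) *
            (∫⁻ _ in B, (1:ℝ≥0∞)) ^ (1 / (ps / (ps - p))) := holder
        _ = (∫⁻ y in B, ((‖u y‖₊ : ℝ≥0∞)) ^ ps) ^ α * (volume B) ^ (1 - α) := by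
            congr 1
            · congr 1
              · congr 1
                funext y
                rw [← ENNReal.rpow_mul]
                congr 1
                field_simp
              · rw [one_div_div]
            · rw [setLIntegral_one]
              congr 1
              rw [one_div_div]
              rw [hαval]
              field_simp
              linarith [hkey]
        _ ≤ L ^ α * (volume B) ^ (1 - α) := by
            apply mul_le_mul_left
            exact ENNReal.rpow_le_rpow (setLIntegral_le_lintegral _ _) hα0.le
    calc ENNReal.ofReal (|u x| ^ p) * volume B
        ≤ (2:ℝ≥0∞) ^ (p - 1) * ((∫⁻ y in B, ENNReal.ofReal (|u x - u y| ^ p)) +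
            ∫⁻ y in B, ENNReal.ofReal (|u y| ^ p)) := step1
      _ ≤ (2:ℝ≥0∞) ^ (p - 1) * (ENNReal.ofReal (r ^ ((d:ℝ) + s * p)) * F x +
            L ^ α * (volume B) ^ (1 - α)) := by
          apply mul_le_mul_right
          exact add_le_add ht1 ht2
  -- pointwise conclusion: for all x
  have dagger : ∀ x : EuclideanSpace ℝ (Fin d), (‖u x‖₊ : ℝ≥0∞) ^ ps ≤
      (2:ℝ≥0∞) ^ ps * B1 ^ (α - 2) * L ^ (1 - α) * F x := by
    intro x
    have hC2 : (0:ℝ≥0∞) < (2:ℝ≥0∞) ^ ps := ENNReal.rpow_pos (by norm_num) (by simp)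
    have hCB : (0:ℝ≥0∞) < B1 ^ (α - 2) := ENNReal.rpow_pos hB1pos hB1top
    have hCL : (0:ℝ≥0∞) < L ^ (1 - α) := ENNReal.rpow_pos (zero_lt_iff.mpr hL0) hLtop
    rcases eq_or_ne (F x) ⊤ with hFtop | hFtop
    · rw [hFtop, ENNReal.mul_top
        (ENNReal.mul_pos (ENNReal.mul_pos hC2.ne' hCB.ne').ne' hCL.ne').ne']
      exact le_top
    -- real-variable reduction
    set f : ℝ := (F x).toReal with hf
    set ℓ : ℝ := L.toReal with hℓ
    have hℓ0 : 0 < ℓ := ENNReal.toReal_pos hL0 hLtop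
    have hf0 : 0 ≤ f := ENNReal.toReal_nonneg
    have Hreal : ∀ r : ℝ, 0 < r →
        |u x| ^ p * (κ * r ^ (d:ℝ)) ≤
          2 ^ (p - 1) * (r ^ ((d:ℝ) + s * p) * f + ℓ ^ α * (κ * r ^ (d:ℝ)) ^ (1 - α)) := by
      intro r hr
      have hm := master x r hr
      have hball : volume (Metric.ball x r) = ENNReal.ofReal (r ^ (d:ℝ)) * B1 := by
        rw [hB1, MeasureTheory.Measure.addHaar_ball _ _ hr.le,
          show (Module.finrank ℝ (EuclideanSpace ℝ (Fin d))) = d by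
            simp [finrank_euclideanSpace], ← Real.rpow_natCast]
      have hμB : volume (Metric.ball x r) ≠ ⊤ := (MeasureTheory.measure_ball_lt_top).ne
      rw [hball] at hm
      have h1ne : ENNReal.ofReal (r ^ ((d:ℝ) + s * p)) * F x ≠ ⊤ :=
        ENNReal.mul_ne_top ENNReal.ofReal_ne_top hFtop
      have h2ne : L ^ α * (ENNReal.ofReal (r ^ (d:ℝ)) * B1) ^ (1 - α) ≠ ⊤ :=
        ENNReal.mul_ne_top (ENNReal.rpow_ne_top_of_nonneg hα0.le hLtop)
          (ENNReal.rpow_ne_top_of_nonneg (by linarith)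
            (ENNReal.mul_ne_top ENNReal.ofReal_ne_top hB1top))
      have hRHSne : (2:ℝ≥0∞) ^ (p - 1) * (ENNReal.ofReal (r ^ ((d:ℝ) + s * p)) * F x +
          L ^ α * (ENNReal.ofReal (r ^ (d:ℝ)) * B1) ^ (1 - α)) ≠ ⊤ := by
        apply ENNReal.mul_ne_top (ENNReal.rpow_ne_top_of_nonneg (by linarith) (by simp))
        exact ENNReal.add_ne_top.mpr ⟨h1ne, h2ne⟩
      have hmt := ENNReal.toReal_mono hRHSne hm
      rw [ENNReal.toReal_mul, ENNReal.toReal_ofReal (by positivity),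
        ENNReal.toReal_mul, ENNReal.toReal_ofReal (by positivity)] at hmt
      rw [ENNReal.toReal_mul, ENNReal.toReal_add h1ne h2ne, ENNReal.toReal_mul,
        ENNReal.toReal_ofReal (by positivity), ENNReal.toReal_mul,
        ← ENNReal.toReal_rpow, ← ENNReal.toReal_rpow, ← ENNReal.toReal_rpow,
        ENNReal.toReal_ofNat, ENNReal.toReal_mul,
        ENNReal.toReal_ofReal (by positivity)] at hmt
      rw [show κ * r ^ (d:ℝ) = r ^ (d:ℝ) * B1.toReal by rw [hκ]; ring]
      exact hmt
    have hreal := gns_real_opt hd0 hκpos hf0 hℓ0 (abs_nonneg (u x)) hp hα0 hsp_eq Hreal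
    rw [← hps_eq] at hreal
    calc (‖u x‖₊ : ℝ≥0∞) ^ ps = ENNReal.ofReal (|u x| ^ ps) :=
          (gns_ofReal_abs_rpow _ hps0.le).symm
      _ ≤ ENNReal.ofReal (2 ^ ps * κ ^ (α - 2) * ℓ ^ (1 - α) * f) :=
          ENNReal.ofReal_le_ofReal hreal
      _ = (2:ℝ≥0∞) ^ ps * B1 ^ (α - 2) * L ^ (1 - α) * F x := by
          rw [ENNReal.ofReal_mul (by positivity), ENNReal.ofReal_mul (by positivity),
            ENNReal.ofReal_mul (by positivity)]
          congr 1
          · congr 1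
            · congr 1
              · rw [← ENNReal.ofReal_rpow_of_pos (by norm_num : (0:ℝ) < 2)]
                norm_num
              · rw [← ENNReal.ofReal_rpow_of_pos hκpos, hκ, ENNReal.ofReal_toReal hB1top]
            · rw [← ENNReal.ofReal_rpow_of_pos hℓ0, hℓ, ENNReal.ofReal_toReal hLtop]
          · rw [hf, ENNReal.ofReal_toReal hFtop]
  -- integrate the pointwise bound
  have hCne : (2:ℝ≥0∞) ^ ps * B1 ^ (α - 2) * L ^ (1 - α) ≠ ⊤ := by
    apply ENNReal.mul_ne_top
    apply ENNReal.mul_ne_top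
    · exact ENNReal.rpow_ne_top_of_nonneg hps0.le (by simp)
    · simp only [ne_eq, ENNReal.rpow_eq_top_iff, not_or, not_and, not_lt]
      exact ⟨fun h => absurd h hB1pos.ne', fun h => absurd h hB1top⟩
    · exact ENNReal.rpow_ne_top_of_nonneg (by linarith) hLtop
  have hint : L ≤ (2:ℝ≥0∞) ^ ps * B1 ^ (α - 2) * L ^ (1 - α) * I := by
    calc L = ∫⁻ x, (‖u x‖₊ : ℝ≥0∞) ^ ps := hL
      _ ≤ ∫⁻ x, (2:ℝ≥0∞) ^ ps * B1 ^ (α - 2) * L ^ (1 - α) * F x := lintegral_mono dagger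
      _ = (2:ℝ≥0∞) ^ ps * B1 ^ (α - 2) * L ^ (1 - α) * I := by
        rw [hIF]
        exact lintegral_const_mul' _ _ hCne
  -- absorb L^(1-α)
  have habs : L ^ α ≤ (2:ℝ≥0∞) ^ ps * B1 ^ (α - 2) * I := by
    have hsplit : L = L ^ (1 - α) * L ^ α := by
      rw [← ENNReal.rpow_add _ _ hL0 hLtop]
      norm_num
    have h1 : L ^ (1 - α) * L ^ α ≤ L ^ (1 - α) * ((2:ℝ≥0∞) ^ ps * B1 ^ (α - 2) * I) := by
      rw [← hsplit]
      calc L ≤ (2:ℝ≥0∞) ^ ps * B1 ^ (α - 2) * L ^ (1 - α) * I := hint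
        _ = L ^ (1 - α) * ((2:ℝ≥0∞) ^ ps * B1 ^ (α - 2) * I) := by ring
    exact (ENNReal.mul_le_mul_iff_right
      (ENNReal.rpow_pos (zero_lt_iff.mpr hL0) hLtop).ne'
      (ENNReal.rpow_ne_top_of_nonneg (by linarith) hLtop)).mp h1
  -- conclude
  have hfinal : L ^ (1/ps) ≤ ((2:ℝ≥0∞) ^ ps * B1 ^ (α - 2) * I) ^ (1/p) := by
    have h1 : L ^ (1/ps) = (L ^ α) ^ (1/p) := by
      rw [← ENNReal.rpow_mul]
      congr 1
      rw [hα]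
      field_simp
    rw [h1]
    exact ENNReal.rpow_le_rpow habs (by positivity)
  refine hfinal.trans ?_
  rw [ENNReal.mul_rpow_of_nonneg _ _ (by positivity : (0:ℝ) ≤ 1/p),
    ENNReal.mul_rpow_of_nonneg _ _ (by positivity : (0:ℝ) ≤ 1/p)]
  apply mul_le_mul_left
  have hB1κ : B1 = ENNReal.ofReal κ := (ENNReal.ofReal_toReal hB1top).symm
  have heq : ((2:ℝ≥0∞) ^ ps) ^ (1/p) * (B1 ^ (α - 2)) ^ (1/p) =
      ENNReal.ofReal (2 ^ (ps / p) * κ ^ (-1 / p - s / d)) := by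
    rw [← ENNReal.rpow_mul, ← ENNReal.rpow_mul,
      ENNReal.ofReal_mul (by positivity)]
    congr 1
    · rw [show (2:ℝ≥0∞) = ENNReal.ofReal 2 by norm_num,
        ENNReal.ofReal_rpow_of_pos (by norm_num : (0:ℝ) < 2), mul_one_div]
    · rw [hB1κ, ENNReal.ofReal_rpow_of_pos hκpos]
      congr 1
      rw [hαval]
      field_simp
      ring
  rw [heq]
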